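/- The function u₀ ↦ ζ(u₀) = θ₁(u₀)θ₂(u₀)(e^{θ₁(u₀)d} - e^{-θ₂(u₀)d})/(r(θ₁(u₀)+θ₂(u₀))e^{θ₁(u₀)d}) satisfies the symmetry ζ(μ - a) = ζ(μ + a) for all a ≥ 0. -/

import Mathlib

open Real Set

noncomputable def th1 (μ σ r u : ℝ) : ℝ := (Real.sqrt ((μ - u)^2 + 2*r*σ^2) + (μ - u)) / σ^2
noncomputable def th2 (μ σ r u : ℝ) : ℝ := (Real.sqrt ((μ - u)^2 + 2*r*σ^2) - (μ - u)) / σ^2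

noncomputable def zeta (μ σ r d u : ℝ) : ℝ :=
  th1 μ σ r u * th2 μ σ r u * (Real.exp (th1 μ σ r u * d) - Real.exp (-(th2 μ σ r u) * d)) /
    (r * (th1 μ σ r u + th2 μ σ r u) * Real.exp (th1 μ σ r u * d))

lemma zeta_aux (r d p q : ℝ) :
    p * q * (Real.exp (p*d) - Real.exp (-q*d)) / (r * (p + q) * Real.exp (p*d)) =
    q * p * (Real.exp (q*d) - Real.exp (-p*d)) / (r * (q + p) * Real.exp (q*d)) := by
  rcases eq_or_ne (r * (p + q)) 0 with h | h
  · rw [show r * (q + p) = r * (p + q) by ring, h]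
    simp
  · have hp := Real.exp_ne_zero (p*d)
    have hq := Real.exp_ne_zero (q*d)
    have h' : r * (q + p) ≠ 0 := by rw [show r * (q + p) = r * (p + q) by ring]; exact h
    field_simp
    have e2 : Real.exp (-(q*d)) * Real.exp (q*d) = 1 := by
      rw [← Real.exp_add]; norm_num
    have e3 : Real.exp (-(p*d)) * Real.exp (p*d) = 1 := by
      rw [← Real.exp_add]; norm_num
    linear_combination (p*q*(p*r+q*r)⁻¹) * (e3 - e2)

theorem stmt19 (μ σ r d : ℝ) (hσ : 0 < σ) (hr : 0 < r) (hd : 0 < d) :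
    ∀ a : ℝ, 0 ≤ a → zeta μ σ r d (μ - a) = zeta μ σ r d (μ + a) := by
  intro a ha
  have h1 : th1 μ σ r (μ + a) = th2 μ σ r (μ - a) := by
    simp only [th1, th2]
    ring_nf
  have h2 : th2 μ σ r (μ + a) = th1 μ σ r (μ - a) := by
    simp only [th1, th2]
    ring_nf
  rw [zeta, zeta, h1, h2]
  exact zeta_aux r d (th1 μ σ r (μ - a)) (th2 μ σ r (μ - a))
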